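/- If F ⊆ Sym(n) is a closed set satisfying positivity (F + P ⊆ F), then F equals the closure of its interior, and the double Dirichlet dual of F equals F (i.e., F̃̃ = F). -/

import Mathlib

open Pointwise
open Matrix

/-- The space of symmetric (self-adjoint) real `n × n` matrices. -/
abbrev SymSpace (n : ℕ) : Type := selfAdjoint (Matrix (Fin n) (Fin n) ℝ)

/-- The cone `P` of positive semidefinite symmetric matrices. -/
def PSDcone (n : ℕ) : Set (SymSpace n) :=
  {A | (A : Matrix (Fin n) (Fin n) ℝ).PosSemidef}

/-- The Dirichlet dual `F̃ = Sym(n) \ (-interior F)`. -/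
def dirDual {n : ℕ} (F : Set (SymSpace n)) : Set (SymSpace n) :=
  {A | -A ∉ interior F}

lemma psd_of_entries_close (n : ℕ) (t δ : ℝ) (hδ : 0 ≤ δ) (hnδ : (n : ℝ) * δ ≤ t)
    (M : Matrix (Fin n) (Fin n) ℝ) (hM : M.IsHermitian)
    (h : ∀ i j, |M i j - t • (1 : Matrix (Fin n) (Fin n) ℝ) i j| ≤ δ) :
    M.PosSemidef := by
  refine Matrix.PosSemidef.of_dotProduct_mulVec_nonneg hM fun x => ?_
  have hsq : (∑ i, |x i|) ^ 2 ≤ (n : ℝ) * ∑ i, x i ^ 2 := by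
    have := sq_sum_le_card_mul_sum_sq (s := (Finset.univ : Finset (Fin n))) (f := fun i => |x i|)
    simpa [sq_abs] using this
  set E : Matrix (Fin n) (Fin n) ℝ := M - t • (1 : Matrix (Fin n) (Fin n) ℝ) with hE
  have key : dotProduct (star x) (M *ᵥ x)
      = t * (∑ i, x i ^ 2) + ∑ i, ∑ j, E i j * (x i * x j) := by
    have e1 : dotProduct (star x) (M *ᵥ x) = ∑ i, ∑ j, M i j * (x i * x j) := by
      simp only [dotProduct, mulVec, star_trivial, Finset.mul_sum]
      exact Finset.sum_congr rfl fun i _ => Finset.sum_congr rfl fun j _ => by ring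
    have e2 : ∀ i j : Fin n, M i j * (x i * x j)
        = (t • (1 : Matrix (Fin n) (Fin n) ℝ)) i j * (x i * x j) + E i j * (x i * x j) := by
      intro i j; simp [hE]; ring
    rw [e1]
    simp only [e2, Finset.sum_add_distrib]
    congr 1
    have : ∀ i : Fin n, ∑ j, (t • (1 : Matrix (Fin n) (Fin n) ℝ)) i j * (x i * x j)
        = t * x i ^ 2 := by
      intro i
      simp [Matrix.smul_apply, Matrix.one_apply, ite_mul, Finset.sum_ite_eq, sq]
      try ring
    rw [Finset.sum_congr rfl fun i _ => this i, Finset.mul_sum]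
  have hbd : -(δ * (∑ i, |x i|) ^ 2) ≤ ∑ i, ∑ j, E i j * (x i * x j) := by
    have hpt : ∀ i j : Fin n, -(δ * (|x i| * |x j|)) ≤ E i j * (x i * x j) := by
      intro i j
      have h1 : |E i j| ≤ δ := h i j
      have h2 : -|E i j * (x i * x j)| ≤ E i j * (x i * x j) := neg_abs_le _
      rw [abs_mul, abs_mul] at h2
      have h3 : |E i j| * (|x i| * |x j|) ≤ δ * (|x i| * |x j|) :=
        mul_le_mul_of_nonneg_right h1 (by positivity)
      linarith
    calc -(δ * (∑ i, |x i|) ^ 2) = ∑ i, ∑ j, -(δ * (|x i| * |x j|)) := by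
          rw [sq, Finset.sum_mul_sum, Finset.mul_sum, ← Finset.sum_neg_distrib]
          refine Finset.sum_congr rfl fun i _ => ?_
          rw [Finset.mul_sum, ← Finset.sum_neg_distrib]
      _ ≤ ∑ i, ∑ j, E i j * (x i * x j) :=
          Finset.sum_le_sum fun i _ => Finset.sum_le_sum fun j _ => hpt i j
  have hx2 : 0 ≤ ∑ i, x i ^ 2 := Finset.sum_nonneg fun i _ => sq_nonneg _
  rw [key]
  nlinarith [hsq, hbd, hx2]

/-- `t • 1` as an element of `SymSpace n`. -/
def tId (n : ℕ) (t : ℝ) : SymSpace n :=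
  ⟨t • (1 : Matrix (Fin n) (Fin n) ℝ), by
    rw [selfAdjoint.mem_iff]
    simp [_root_.IsSelfAdjoint, star_smul]⟩

lemma mem_interior_step {n : ℕ} {F : Set (SymSpace n)} (hFp : F + PSDcone n ⊆ F)
    {A : SymSpace n} (hA : A ∈ F) {t : ℝ} (ht : 0 < t) : A + tId n t ∈ interior F := by
  set δ : ℝ := t / (n + 1) with hδdef
  have hδ : 0 < δ := by positivity
  set U : Set (SymSpace n) :=
    {M | ∀ i j, dist ((M : Matrix (Fin n) (Fin n) ℝ) i j)
      (((A + tId n t : SymSpace n) : Matrix (Fin n) (Fin n) ℝ) i j) < δ} with hU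
  refine mem_interior.2 ⟨U, ?_, ?_, ?_⟩
  · -- U ⊆ F
    intro M hM
    have hpsd : M - A ∈ PSDcone n := by
      refine psd_of_entries_close n t δ hδ.le ?_ _ ?_ ?_
      · have hn1 : (0:ℝ) < (n:ℝ) + 1 := by positivity
        rw [show δ = t / (n+1) from rfl, ← mul_div_assoc, div_le_iff₀ hn1]
        nlinarith [Nat.cast_nonneg (α := ℝ) n, ht]
      · exact (M - A).2
      · intro i j
        have := hM i j
        rw [Real.dist_eq] at this
        have hco : ((M - A : SymSpace n) : Matrix (Fin n) (Fin n) ℝ) i j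
            = (M : Matrix (Fin n) (Fin n) ℝ) i j - (A : Matrix (Fin n) (Fin n) ℝ) i j := rfl
        have hco2 : ((A + tId n t : SymSpace n) : Matrix (Fin n) (Fin n) ℝ) i j
            = (A : Matrix (Fin n) (Fin n) ℝ) i j + (t • (1 : Matrix (Fin n) (Fin n) ℝ)) i j := rfl
        rw [hco2] at this
        rw [Matrix.smul_apply, sub_add_eq_sub_sub] at this
        rw [hco]
        exact this.le
    have : M = A + (M - A) := by abel
    rw [this]
    exact hFp (Set.add_mem_add hA hpsd)
  · -- U open
    have : U = ⋂ i, ⋂ j, (fun M : SymSpace n => (M : Matrix (Fin n) (Fin n) ℝ) i j) ⁻¹'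
        (Metric.ball (((A + tId n t : SymSpace n) : Matrix (Fin n) (Fin n) ℝ) i j) δ) := by
      ext M; simp [hU, Metric.mem_ball]
    rw [this]
    refine isOpen_iInter_of_finite fun i => isOpen_iInter_of_finite fun j => ?_
    have hcont : Continuous fun M : SymSpace n => (M : Matrix (Fin n) (Fin n) ℝ) i j :=
      (continuous_subtype_val).matrix_elem i j
    exact Metric.isOpen_ball.preimage hcont
  · intro i j; simpa using hδ

theorem dual_dual_eq_self (n : ℕ) (F : Set (SymSpace n)) (hFc : IsClosed F)
    (hFp : F + PSDcone n ⊆ F) :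
    F = closure (interior F) ∧ dirDual (dirDual F) = F := by
  have hF : F = closure (interior F) := by
    refine le_antisymm ?_ ?_
    · intro A hA
      have hseq : Filter.Tendsto (fun k : ℕ => A + tId n (1 / (k + 1)))
          Filter.atTop (nhds A) := by
        rw [Topology.IsEmbedding.subtypeVal.tendsto_nhds_iff]
        have h0 : Filter.Tendsto (fun k : ℕ => (1 : ℝ) / (k + 1)) Filter.atTop (nhds 0) :=
          tendsto_one_div_add_atTop_nhds_zero_nat
        have := (h0.smul_const (1 : Matrix (Fin n) (Fin n) ℝ)).const_add
          (A : Matrix (Fin n) (Fin n) ℝ)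
        simpa [Function.comp_def, tId] using this
      refine mem_closure_of_tendsto hseq ?_
      filter_upwards with k
      exact mem_interior_step hFp hA (by positivity)
    · calc closure (interior F) ⊆ closure F := closure_mono interior_subset
        _ = F := hFc.closure_eq
  refine ⟨hF, ?_⟩
  have hdd : dirDual F = (fun B : SymSpace n => -B) ⁻¹' (interior F)ᶜ := rfl
  have e : SymSpace n ≃ₜ SymSpace n := Homeomorph.neg (SymSpace n)
  have hint : interior (dirDual F)
      = (fun B : SymSpace n => -B) ⁻¹' (closure (interior F))ᶜ := by
    rw [hdd]
    have h2 := (Homeomorph.neg (SymSpace n)).preimage_interior ((interior F)ᶜ)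
    rw [Homeomorph.coe_neg] at h2
    rw [← h2, interior_compl]
  ext A
  have h3 : A ∈ dirDual (dirDual F) ↔ -A ∉ interior (dirDual F) := Iff.rfl
  rw [h3, hint]
  simp only [Set.mem_preimage, neg_neg, Set.mem_compl_iff, not_not, ← hF]
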